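/- Let ∑ a¹_n, ∑ a²_n, ∑ a³_n be conditionally convergent series of real numbers. Then the family F = { φ_A : A ⊆ ℕ is tame with respect to all three series, and φ_A is not the empty partial function } is a full, union-closed subset of Fn(3,2). -/
import Mathlib


open Filter

/-- The partial sums of the subseries of `a` over `A`: `S N = ∑_{n < N, n ∈ A} a n`. -/
noncomputable def partialSum (a : ℕ → ℝ) (A : Set ℕ) (N : ℕ) : ℝ :=
  ∑ n ∈ Finset.range N, Set.indicator A a n

/-- `A` sends the series `∑ a n` to infinity: the subseries over `A` tends to `+∞` or `-∞`. -/
def SendsToInfinity (a : ℕ → ℝ) (A : Set ℕ) : Prop :=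
  Tendsto (partialSum a A) atTop atTop ∨ Tendsto (partialSum a A) atTop atBot

/-- `∑ a n` is conditionally convergent: partial sums converge, but `∑ |a n| = ∞`. -/
def CondConv (a : ℕ → ℝ) : Prop :=
  (∃ L : ℝ, Tendsto (fun N => ∑ n ∈ Finset.range N, a n) atTop (nhds L)) ∧
    ¬ Summable (fun n => |a n|)

/-- The subseries of `a` over `A` is absolutely convergent: `∑_{n ∈ A} |a n| < ∞`. -/
def AbsConvOn (a : ℕ → ℝ) (A : Set ℕ) : Prop :=
  Summable (Set.indicator A fun n => |a n|)

/-- `A` is tame w.r.t. `∑ a n` if at least one of the positive/nonpositive parts of the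
subseries over `A` is absolutely convergent. -/
def Tame (a : ℕ → ℝ) (A : Set ℕ) : Prop :=
  AbsConvOn a {n ∈ A | 0 < a n} ∨ AbsConvOn a {n ∈ A | a n ≤ 0}

/-- A partial function from `{1,2,3}` to the two-element set `{p, n}` (here `p = true`,
`n = false`), encoded as `Fin 3 → Option Bool`. `Fn32` is the set of such partial functions
with nonempty domain. -/
def Fn32 : Set (Fin 3 → Option Bool) :=
  {f | ∃ x, f x ≠ none}

/-- The domain of a partial function. -/
def pdom (f : Fin 3 → Option Bool) : Finset (Fin 3) :=
  Finset.univ.filter (fun x => f x ≠ none)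

/-- `F` is full: every value is attained at every point by some member of `F`. -/
def Full (F : Set (Fin 3 → Option Bool)) : Prop :=
  ∀ x : Fin 3, ∀ y : Bool, ∃ f ∈ F, f x = some y

/-- Two partial functions are compatible if they agree on the intersection of their domains. -/
def Compatible (f g : Fin 3 → Option Bool) : Prop :=
  ∀ x, f x = none ∨ g x = none ∨ f x = g x

/-- The union of two (compatible) partial functions. -/
def pUnion (f g : Fin 3 → Option Bool) : Fin 3 → Option Bool :=
  fun x => (f x).orElse (fun _ => g x)

/-- `F` is union-closed: the union of any two compatible members of `F` is in `F`. -/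
def UnionClosed (F : Set (Fin 3 → Option Bool)) : Prop :=
  ∀ f ∈ F, ∀ g ∈ F, Compatible f g → pUnion f g ∈ F

open scoped Classical in
/-- `phi a A` is the partial function recording, for each of the three series, whether the
subseries over `A` tends to `+∞` (`p = true`) or `-∞` (`n = false`), undefined otherwise. -/
noncomputable def phi (a : Fin 3 → ℕ → ℝ) (A : Set ℕ) : Fin 3 → Option Bool :=
  fun i =>
    if Tendsto (partialSum (a i) A) atTop atTop then some true
    else if Tendsto (partialSum (a i) A) atTop atBot then some false
    else none

section AuxLemmas

lemma absConvOn_summable {a : ℕ → ℝ} {S : Set ℕ} (h : AbsConvOn a S) :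
    Summable (S.indicator a) := by
  refine Summable.of_abs ?_
  have : (fun n => |S.indicator a n|) = S.indicator fun n => |a n| := by
    funext n; by_cases hn : n ∈ S <;> simp [Set.indicator_apply, hn]
  rw [this]; exact h

lemma absConvOn_mono {a : ℕ → ℝ} {S T : Set ℕ} (h : AbsConvOn a T) (hST : S ⊆ T) :
    AbsConvOn a S :=
  Summable.of_nonneg_of_le (fun n => Set.indicator_nonneg (fun n _ => abs_nonneg _) n)
    (fun n => Set.indicator_le_indicator_of_subset hST (fun _ => abs_nonneg _) n) h

lemma absConvOn_union {a : ℕ → ℝ} {S T : Set ℕ} (h1 : AbsConvOn a S) (h2 : AbsConvOn a T) :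
    AbsConvOn a (S ∪ T) := by
  refine Summable.of_nonneg_of_le (f := fun n => S.indicator (fun n => |a n|) n
      + T.indicator (fun n => |a n|) n)
    (fun n => Set.indicator_nonneg (fun n _ => abs_nonneg _) n) (fun n => ?_) (h1.add h2)
  by_cases hS : n ∈ S <;> by_cases hT : n ∈ T <;>
    simp [Set.indicator_apply, hS, hT, abs_nonneg]

lemma absConvOn_empty (a : ℕ → ℝ) : AbsConvOn a ∅ := by
  rw [AbsConvOn, Set.indicator_empty]; exact summable_zero

lemma partialSum_split (a : ℕ → ℝ) (A : Set ℕ) (N : ℕ) :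
    partialSum a A N = partialSum a {n ∈ A | 0 < a n} N + partialSum a {n ∈ A | a n ≤ 0} N := by
  unfold partialSum
  rw [← Finset.sum_add_distrib]
  refine Finset.sum_congr rfl fun n _ => ?_
  by_cases hA : n ∈ A
  · rcases lt_or_ge 0 (a n) with h | h
    · simp [Set.indicator_apply, Set.mem_setOf_eq, hA, h, not_le.2 h]
    · simp [Set.indicator_apply, Set.mem_setOf_eq, hA, h, not_lt.2 h]
  · simp [Set.indicator_apply, Set.mem_setOf_eq, hA]

lemma pos_diverge {a : ℕ → ℝ} {S : Set ℕ} (hS : ∀ n ∈ S, 0 < a n) (h : ¬ AbsConvOn a S) :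
    Tendsto (partialSum a S) atTop atTop := by
  have heq : (S.indicator fun n => |a n|) = S.indicator a := by
    funext n
    by_cases hn : n ∈ S
    · simp [Set.indicator_apply, hn, abs_of_pos (hS n hn)]
    · simp [Set.indicator_apply, hn]
  rw [AbsConvOn, heq] at h
  have hnn : ∀ n, 0 ≤ S.indicator a n :=
    fun n => Set.indicator_nonneg (fun n hn => (hS n hn).le) n
  exact (not_summable_iff_tendsto_nat_atTop_of_nonneg hnn).1 h

lemma neg_diverge {a : ℕ → ℝ} {S : Set ℕ} (hS : ∀ n ∈ S, a n ≤ 0) (h : ¬ AbsConvOn a S) :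
    Tendsto (partialSum a S) atTop atBot := by
  have hnn : ∀ n, 0 ≤ S.indicator (fun n => |a n|) n :=
    fun n => Set.indicator_nonneg (fun n _ => abs_nonneg _) n
  have hdiv := (not_summable_iff_tendsto_nat_atTop_of_nonneg hnn).1 h
  have h2 : Tendsto (fun N => -∑ n ∈ Finset.range N, S.indicator (fun n => |a n|) n)
      atTop atBot := tendsto_neg_atTop_atBot.comp hdiv
  refine h2.congr fun N => ?_
  unfold partialSum
  rw [← Finset.sum_neg_distrib]
  refine Finset.sum_congr rfl fun n _ => ?_
  by_cases hn : n ∈ S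
  · simp [Set.indicator_apply, hn, abs_of_nonpos (hS n hn)]
  · simp [Set.indicator_apply, hn]

lemma not_atTop_of_atBot {f : ℕ → ℝ} (h : Tendsto f atTop atBot) :
    ¬ Tendsto f atTop atTop := by
  intro h'
  obtain ⟨n, h1, h2⟩ :=
    ((h.eventually (eventually_lt_atBot (0:ℝ))).and
      (h'.eventually (eventually_gt_atTop (0:ℝ)))).exists
  linarith

lemma summable_of_nonneg_of_tendsto {f : ℕ → ℝ} (hf : ∀ n, 0 ≤ f n) {L : ℝ}
    (h : Tendsto (fun N => ∑ n ∈ Finset.range N, f n) atTop (nhds L)) : Summable f := by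
  by_contra hns
  exact not_tendsto_atTop_of_tendsto_nhds h
    ((not_summable_iff_tendsto_nat_atTop_of_nonneg hf).1 hns)

lemma negConv_tendsto {a : ℕ → ℝ} {S : Set ℕ} (h : AbsConvOn a S) :
    ∃ L, Tendsto (partialSum a S) atTop (nhds L) :=
  ⟨_, (absConvOn_summable h).hasSum.tendsto_sum_nat⟩

lemma phi_eq_true_of {a : Fin 3 → ℕ → ℝ} {A : Set ℕ} {i : Fin 3}
    (hP : ¬ AbsConvOn (a i) {n ∈ A | 0 < a i n})
    (hN : AbsConvOn (a i) {n ∈ A | a i n ≤ 0}) : phi a A i = some true := by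
  obtain ⟨L, hL⟩ := negConv_tendsto hN
  have hpos := pos_diverge (fun n hn => hn.2) hP
  have hT : Tendsto (partialSum (a i) A) atTop atTop :=
    (hpos.atTop_add hL).congr fun N => (partialSum_split (a i) A N).symm
  simp only [phi]; rw [if_pos hT]

lemma phi_eq_false_of {a : Fin 3 → ℕ → ℝ} {A : Set ℕ} {i : Fin 3}
    (hP : AbsConvOn (a i) {n ∈ A | 0 < a i n})
    (hN : ¬ AbsConvOn (a i) {n ∈ A | a i n ≤ 0}) : phi a A i = some false := by
  obtain ⟨L, hL⟩ := negConv_tendsto hP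
  have hneg := neg_diverge (fun n hn => hn.2) hN
  have hT : Tendsto (partialSum (a i) A) atTop atBot :=
    (hL.add_atBot hneg).congr fun N => (partialSum_split (a i) A N).symm
  simp only [phi]; rw [if_neg (not_atTop_of_atBot hT), if_pos hT]

lemma phi_eq_none_of {a : Fin 3 → ℕ → ℝ} {A : Set ℕ} {i : Fin 3}
    (hP : AbsConvOn (a i) {n ∈ A | 0 < a i n})
    (hN : AbsConvOn (a i) {n ∈ A | a i n ≤ 0}) : phi a A i = none := by
  obtain ⟨L1, hL1⟩ := negConv_tendsto hP
  obtain ⟨L2, hL2⟩ := negConv_tendsto hN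
  have hT : Tendsto (partialSum (a i) A) atTop (nhds (L1 + L2)) :=
    (hL1.add hL2).congr fun N => (partialSum_split (a i) A N).symm
  simp only [phi]
  rw [if_neg (not_tendsto_atTop_of_tendsto_nhds hT),
    if_neg (not_tendsto_atBot_of_tendsto_nhds hT)]

lemma phi_spec1 {a : Fin 3 → ℕ → ℝ} {A : Set ℕ} {i : Fin 3} (hT : Tame (a i) A) :
    (phi a A i = some true ∧ ¬ AbsConvOn (a i) {n ∈ A | 0 < a i n}
        ∧ AbsConvOn (a i) {n ∈ A | a i n ≤ 0}) ∨
    (phi a A i = some false ∧ AbsConvOn (a i) {n ∈ A | 0 < a i n}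
        ∧ ¬ AbsConvOn (a i) {n ∈ A | a i n ≤ 0}) ∨
    (phi a A i = none ∧ AbsConvOn (a i) {n ∈ A | 0 < a i n}
        ∧ AbsConvOn (a i) {n ∈ A | a i n ≤ 0}) := by
  by_cases hP : AbsConvOn (a i) {n ∈ A | 0 < a i n} <;>
    by_cases hN : AbsConvOn (a i) {n ∈ A | a i n ≤ 0}
  · exact Or.inr (Or.inr ⟨phi_eq_none_of hP hN, hP, hN⟩)
  · exact Or.inr (Or.inl ⟨phi_eq_false_of hP hN, hP, hN⟩)
  · exact Or.inl ⟨phi_eq_true_of hP hN, hP, hN⟩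
  · rcases hT with h | h
    · exact absurd h hP
    · exact absurd h hN

end AuxLemmas

section CondConvParts

lemma part_pointwise (a : ℕ → ℝ) (n : ℕ) :
    a n = Set.indicator {n | 0 < a n} a n + Set.indicator {n | a n ≤ 0} a n := by
  rcases lt_or_ge 0 (a n) with h | h
  · simp [Set.indicator_apply, Set.mem_setOf_eq, h, not_le.2 h]
  · simp [Set.indicator_apply, Set.mem_setOf_eq, h, not_lt.2 h]

lemma abs_part_pointwise (a : ℕ → ℝ) (n : ℕ) :
    |a n| = Set.indicator {n | 0 < a n} (fun n => |a n|) n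
      + Set.indicator {n | a n ≤ 0} (fun n => |a n|) n := by
  rcases lt_or_ge 0 (a n) with h | h
  · simp [Set.indicator_apply, Set.mem_setOf_eq, h, not_le.2 h]
  · simp [Set.indicator_apply, Set.mem_setOf_eq, h, not_lt.2 h]

lemma other_tendsto {a : ℕ → ℝ} {L : ℝ}
    (hL : Tendsto (fun N => ∑ n ∈ Finset.range N, a n) atTop (nhds L))
    {S : Set ℕ} (hS : Summable (S.indicator a))
    (hpart : ∀ n, a n = S.indicator a n + Sᶜ.indicator a n) :
    ∃ M, Tendsto (fun N => ∑ n ∈ Finset.range N, Sᶜ.indicator a n) atTop (nhds M) := by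
  refine ⟨L - ∑' n, S.indicator a n, ?_⟩
  have h1 := hS.hasSum.tendsto_sum_nat
  have : (fun N => ∑ n ∈ Finset.range N, Sᶜ.indicator a n)
      = fun N => (∑ n ∈ Finset.range N, a n) - ∑ n ∈ Finset.range N, S.indicator a n := by
    funext N
    rw [← Finset.sum_sub_distrib]
    exact Finset.sum_congr rfl fun n _ => by rw [hpart n]; ring
  rw [this]
  exact hL.sub h1

lemma compl_pos (a : ℕ → ℝ) : {n | 0 < a n}ᶜ = {n | a n ≤ 0} := by
  ext n; simp [not_lt]

lemma compl_neg (a : ℕ → ℝ) : {n | a n ≤ 0}ᶜ = {n | 0 < a n} := by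
  ext n; simp [not_le]

lemma not_absConvOn_pos {a : ℕ → ℝ} (h : CondConv a) : ¬ AbsConvOn a {n | 0 < a n} := by
  intro hpos
  obtain ⟨⟨L, hL⟩, habs⟩ := h
  have hS : Summable (Set.indicator {n | 0 < a n} a) := absConvOn_summable hpos
  obtain ⟨M, hM⟩ := other_tendsto hL hS (fun n => by
    rw [compl_pos]; exact part_pointwise a n)
  rw [compl_pos] at hM
  have hnegabs : Summable (Set.indicator {n | a n ≤ 0} fun n => |a n|) := by
    refine summable_of_nonneg_of_tendsto
      (fun n => Set.indicator_nonneg (fun n _ => abs_nonneg _) n) (L := -M) ?_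
    have : (fun N => ∑ n ∈ Finset.range N, Set.indicator {n | a n ≤ 0} (fun n => |a n|) n)
        = fun N => -∑ n ∈ Finset.range N, Set.indicator {n | a n ≤ 0} a n := by
      funext N
      rw [← Finset.sum_neg_distrib]
      refine Finset.sum_congr rfl fun n _ => ?_
      by_cases hn : n ∈ {n | a n ≤ 0}
      · simp [Set.indicator_apply, hn, abs_of_nonpos (show a n ≤ 0 from hn)]
      · simp [Set.indicator_apply, hn]
    rw [this]
    exact hM.neg
  exact habs (((hpos.add hnegabs).congr fun n => (abs_part_pointwise a n).symm))

lemma not_absConvOn_neg {a : ℕ → ℝ} (h : CondConv a) : ¬ AbsConvOn a {n | a n ≤ 0} := by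
  intro hneg
  obtain ⟨⟨L, hL⟩, habs⟩ := h
  have hS : Summable (Set.indicator {n | a n ≤ 0} a) := absConvOn_summable hneg
  obtain ⟨M, hM⟩ := other_tendsto hL hS (fun n => by
    rw [compl_neg]
    rw [part_pointwise a n]; ring)
  rw [compl_neg] at hM
  have hposabs : Summable (Set.indicator {n | 0 < a n} fun n => |a n|) := by
    refine summable_of_nonneg_of_tendsto
      (fun n => Set.indicator_nonneg (fun n _ => abs_nonneg _) n) (L := M) ?_
    have : (fun N => ∑ n ∈ Finset.range N, Set.indicator {n | 0 < a n} (fun n => |a n|) n)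
        = fun N => ∑ n ∈ Finset.range N, Set.indicator {n | 0 < a n} a n := by
      funext N
      refine Finset.sum_congr rfl fun n _ => ?_
      by_cases hn : n ∈ {n | 0 < a n}
      · simp [Set.indicator_apply, hn, abs_of_pos (show 0 < a n from hn)]
      · simp [Set.indicator_apply, hn]
    rw [this]
    exact hM
  exact habs ((hposabs.add hneg).congr fun n => (abs_part_pointwise a n).symm)

end CondConvParts

section Cells

noncomputable def sgn (a : Fin 3 → ℕ → ℝ) (n : ℕ) : Fin 3 → Bool := fun j => decide (0 < a j n)

def cell (a : Fin 3 → ℕ → ℝ) (s : Fin 3 → Bool) : Set ℕ := {n | sgn a n = s}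

lemma sgn_set_true (a : Fin 3 → ℕ → ℝ) (x : Fin 3) :
    {n | sgn a n x = true} = {n | 0 < a x n} := by
  ext n; simp [sgn]

lemma sgn_set_false (a : Fin 3 → ℕ → ℝ) (x : Fin 3) :
    {n | sgn a n x = false} = {n | a x n ≤ 0} := by
  ext n; simp [sgn, not_lt]

lemma summable_finset_sum {ι : Type*} (s : Finset ι) (f : ι → ℕ → ℝ)
    (h : ∀ i ∈ s, Summable (f i)) : Summable (fun n => ∑ i ∈ s, f i n) := by
  classical
  induction s using Finset.induction_on with
  | empty => simpa using summable_zero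
  | @insert i s hi ih =>
      have : (fun n => ∑ j ∈ insert i s, f j n) = fun n => f i n + ∑ j ∈ s, f j n := by
        funext n; rw [Finset.sum_insert hi]
      rw [this]
      exact (h i (Finset.mem_insert_self i s)).add
        (ih fun j hj => h j (Finset.mem_insert_of_mem hj))

lemma exists_cell {a : Fin 3 → ℕ → ℝ} {x : Fin 3} {b : Bool}
    (h : ¬ AbsConvOn (a x) {n | sgn a n x = b}) :
    ∃ s : Fin 3 → Bool, s x = b ∧ ¬ AbsConvOn (a x) (cell a s) := by
  by_contra hc
  push_neg at hc
  apply h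
  set T : Finset (Fin 3 → Bool) := Finset.univ.filter (fun s => s x = b) with hT
  have hsum : Summable (fun n => ∑ s ∈ T, (cell a s).indicator (fun n => |a x n|) n) :=
    summable_finset_sum T _ (fun s hs => hc s (Finset.mem_filter.1 hs).2)
  refine Summable.of_nonneg_of_le
    (fun n => Set.indicator_nonneg (fun n _ => abs_nonneg _) n) (fun n => ?_) hsum
  by_cases hn : n ∈ {n | sgn a n x = b}
  · have hmem : sgn a n ∈ T := Finset.mem_filter.2 ⟨Finset.mem_univ _, hn⟩
    have h1 : (cell a (sgn a n)).indicator (fun n => |a x n|) n = |a x n| := by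
      simp [Set.indicator_apply, cell, Set.mem_setOf_eq]
    calc Set.indicator {n | sgn a n x = b} (fun n => |a x n|) n = |a x n| := by
          simp [Set.indicator_apply, hn]
      _ = (cell a (sgn a n)).indicator (fun n => |a x n|) n := h1.symm
      _ ≤ ∑ s ∈ T, (cell a s).indicator (fun n => |a x n|) n :=
          Finset.single_le_sum (f := fun s => (cell a s).indicator (fun n => |a x n|) n)
            (fun s _ => Set.indicator_nonneg (fun n _ => abs_nonneg _) n) hmem
  · simp only [Set.indicator_apply, hn, if_neg hn]
    exact Finset.sum_nonneg fun s _ => Set.indicator_nonneg (fun n _ => abs_nonneg _) n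

lemma cell_tame (a : Fin 3 → ℕ → ℝ) (s : Fin 3 → Bool) (j : Fin 3) :
    Tame (a j) (cell a s) := by
  cases hsj : s j with
  | true =>
      right
      have : {n ∈ cell a s | a j n ≤ 0} = ∅ := by
        ext n
        simp only [Set.mem_setOf_eq, Set.mem_empty_iff_false, iff_false, not_and, cell]
        intro hn
        have : sgn a n j = true := by rw [hn, hsj]
        have : 0 < a j n := by simpa [sgn] using this
        exact not_le.2 this
      rw [this]; exact absConvOn_empty _
  | false =>
      left
      have : {n ∈ cell a s | 0 < a j n} = ∅ := by
        ext n
        simp only [Set.mem_setOf_eq, Set.mem_empty_iff_false, iff_false, not_and, cell]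
        intro hn
        have h1 : sgn a n j = false := by rw [hn, hsj]
        have : a j n ≤ 0 := by simpa [sgn, not_lt] using h1
        exact not_lt.2 this
      rw [this]; exact absConvOn_empty _

end Cells

section Main

lemma full_aux (a : Fin 3 → ℕ → ℝ) (hcc : ∀ i, CondConv (a i)) (x : Fin 3) (y : Bool) :
    ∃ A : Set ℕ, (∀ i, Tame (a i) A) ∧ phi a A x = some y := by
  have hb : ¬ AbsConvOn (a x) {n | sgn a n x = y} := by
    cases y
    · rw [sgn_set_false]; exact not_absConvOn_neg (hcc x)
    · rw [sgn_set_true]; exact not_absConvOn_pos (hcc x)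
  obtain ⟨s, hsx, hcell⟩ := exists_cell hb
  refine ⟨cell a s, fun i => cell_tame a s i, ?_⟩
  cases y with
  | true =>
      have hpos : ∀ n ∈ cell a s, 0 < a x n := by
        intro n hn
        have : sgn a n x = true := by rw [show sgn a n = s from hn, hsx]
        simpa [sgn] using this
      have hset : {n ∈ cell a s | 0 < a x n} = cell a s := by
        ext n; simp only [Set.mem_setOf_eq, and_iff_left_iff_imp]
        exact hpos n
      have hNempty : {n ∈ cell a s | a x n ≤ 0} = ∅ := by
        ext n
        simp only [Set.mem_setOf_eq, Set.mem_empty_iff_false, iff_false, not_and]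
        exact fun hn => not_le.2 (hpos n hn)
      refine phi_eq_true_of ?_ ?_
      · rw [hset]; exact hcell
      · rw [hNempty]; exact absConvOn_empty _
  | false =>
      have hneg : ∀ n ∈ cell a s, a x n ≤ 0 := by
        intro n hn
        have : sgn a n x = false := by rw [show sgn a n = s from hn, hsx]
        simpa [sgn, not_lt] using this
      have hset : {n ∈ cell a s | a x n ≤ 0} = cell a s := by
        ext n; simp only [Set.mem_setOf_eq, and_iff_left_iff_imp]
        exact hneg n
      have hPempty : {n ∈ cell a s | 0 < a x n} = ∅ := by
        ext n
        simp only [Set.mem_setOf_eq, Set.mem_empty_iff_false, iff_false, not_and]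
        exact fun hn => not_lt.2 (hneg n hn)
      refine phi_eq_false_of ?_ ?_
      · rw [hPempty]; exact absConvOn_empty _
      · rw [hset]; exact hcell

lemma sep_union (A B : Set ℕ) (P : ℕ → Prop) :
    {n ∈ A ∪ B | P n} = {n ∈ A | P n} ∪ {n ∈ B | P n} := by
  ext n
  simp only [Set.mem_setOf_eq, Set.mem_union]
  tauto

lemma union_index {a : Fin 3 → ℕ → ℝ} {A B : Set ℕ} (i : Fin 3)
    (hA : Tame (a i) A) (hB : Tame (a i) B)
    (hc : phi a A i = none ∨ phi a B i = none ∨ phi a A i = phi a B i) :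
    Tame (a i) (A ∪ B) ∧
      phi a (A ∪ B) i = (phi a A i).orElse (fun _ => phi a B i) := by
  have hposU : {n ∈ A ∪ B | 0 < a i n} = {n ∈ A | 0 < a i n} ∪ {n ∈ B | 0 < a i n} :=
    sep_union A B _
  have hnegU : {n ∈ A ∪ B | a i n ≤ 0} = {n ∈ A | a i n ≤ 0} ∪ {n ∈ B | a i n ≤ 0} :=
    sep_union A B _
  rcases phi_spec1 hA with ⟨hvA, hPA, hNA⟩ | ⟨hvA, hPA, hNA⟩ | ⟨hvA, hPA, hNA⟩ <;>
    rcases phi_spec1 hB with ⟨hvB, hPB, hNB⟩ | ⟨hvB, hPB, hNB⟩ | ⟨hvB, hPB, hNB⟩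
  -- (true, true)
  · refine ⟨Or.inr (by rw [hnegU]; exact absConvOn_union hNA hNB), ?_⟩
    rw [hvA, hvB]
    rw [phi_eq_true_of (by rw [hposU]; exact fun h => hPA (absConvOn_mono h Set.subset_union_left))
      (by rw [hnegU]; exact absConvOn_union hNA hNB)]
    rfl
  -- (true, false) : incompatible
  · rw [hvA, hvB] at hc; simp at hc
  -- (true, none)
  · refine ⟨Or.inr (by rw [hnegU]; exact absConvOn_union hNA hNB), ?_⟩
    rw [hvA, hvB]
    rw [phi_eq_true_of (by rw [hposU]; exact fun h => hPA (absConvOn_mono h Set.subset_union_left))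
      (by rw [hnegU]; exact absConvOn_union hNA hNB)]
    rfl
  -- (false, true) : incompatible
  · rw [hvA, hvB] at hc; simp at hc
  -- (false, false)
  · refine ⟨Or.inl (by rw [hposU]; exact absConvOn_union hPA hPB), ?_⟩
    rw [hvA, hvB]
    rw [phi_eq_false_of (by rw [hposU]; exact absConvOn_union hPA hPB)
      (by rw [hnegU]; exact fun h => hNA (absConvOn_mono h Set.subset_union_left))]
    rfl
  -- (false, none)
  · refine ⟨Or.inl (by rw [hposU]; exact absConvOn_union hPA hPB), ?_⟩
    rw [hvA, hvB]
    rw [phi_eq_false_of (by rw [hposU]; exact absConvOn_union hPA hPB)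
      (by rw [hnegU]; exact fun h => hNA (absConvOn_mono h Set.subset_union_left))]
    rfl
  -- (none, true)
  · refine ⟨Or.inr (by rw [hnegU]; exact absConvOn_union hNA hNB), ?_⟩
    rw [hvA, hvB]
    rw [phi_eq_true_of (by rw [hposU]; exact fun h => hPB (absConvOn_mono h Set.subset_union_right))
      (by rw [hnegU]; exact absConvOn_union hNA hNB)]
    rfl
  -- (none, false)
  · refine ⟨Or.inl (by rw [hposU]; exact absConvOn_union hPA hPB), ?_⟩
    rw [hvA, hvB]
    rw [phi_eq_false_of (by rw [hposU]; exact absConvOn_union hPA hPB)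
      (by rw [hnegU]; exact fun h => hNB (absConvOn_mono h Set.subset_union_right))]
    rfl
  -- (none, none)
  · refine ⟨Or.inl (by rw [hposU]; exact absConvOn_union hPA hPB), ?_⟩
    rw [hvA, hvB]
    rw [phi_eq_none_of (by rw [hposU]; exact absConvOn_union hPA hPB)
      (by rw [hnegU]; exact absConvOn_union hNA hNB)]
    rfl

end Main


/-- Lemma 6: the family of all `phi A` for tame `A` with `phi A` nonempty is a full,
union-closed subset of `Fn(3,2)`. -/
theorem phi_family_full_unionClosed (a : Fin 3 → ℕ → ℝ) (hcc : ∀ i, CondConv (a i)) :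
    {f | ∃ A : Set ℕ, (∀ i, Tame (a i) A) ∧ phi a A ∈ Fn32 ∧ f = phi a A} ⊆ Fn32 ∧
    Full {f | ∃ A : Set ℕ, (∀ i, Tame (a i) A) ∧ phi a A ∈ Fn32 ∧ f = phi a A} ∧
    UnionClosed {f | ∃ A : Set ℕ, (∀ i, Tame (a i) A) ∧ phi a A ∈ Fn32 ∧ f = phi a A} := by
  refine ⟨?_, ?_, ?_⟩
  · rintro f ⟨A, -, hne, rfl⟩; exact hne
  · intro x y
    obtain ⟨A, hTame, hval⟩ := full_aux a hcc x y
    exact ⟨phi a A, ⟨A, hTame, ⟨x, by rw [hval]; simp⟩, rfl⟩, hval⟩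
  · rintro f ⟨A, hAt, hAne, rfl⟩ g ⟨B, hBt, hBne, rfl⟩ hcomp
    have hidx := fun i => union_index i (hAt i) (hBt i) (hcomp i)
    have heq : pUnion (phi a A) (phi a B) = phi a (A ∪ B) := by
      funext i; exact ((hidx i).2).symm
    refine ⟨A ∪ B, fun i => (hidx i).1, ?_, heq⟩
    obtain ⟨x, hx⟩ := hAne
    refine ⟨x, ?_⟩
    rw [← heq]
    simp only [pUnion]
    cases hv : phi a A x with
    | none => exact absurd hv hx
    | some b => simp [Option.orElse]
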